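/- Let K ≥ 1, let (Z_i, Y_i) for i = 1, …, K+1 be random variables taking values in a measurable space E × ℝ whose joint distribution is exchangeable, and let μ_lo, μ_hi : E → ℝ be fixed measurable functions. Define the non-conformity scores v_i = max(μ_lo(Z_i) − Y_i, Y_i − μ_hi(Z_i)). Fix α ∈ (0,1) with ⌈(K+1)(1−α)⌉ ≤ K, and let q̂ be the ⌈(K+1)(1−α)⌉-th order statistic of v_1, …, v_K. Then ℙ( μ_lo(Z_{K+1}) − q̂ ≤ Y_{K+1} and Y_{K+1} ≤ μ_hi(Z_{K+1}) + q̂ ) ≥ 1 − α. -/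

import Mathlib

open MeasureTheory
open scoped ENNReal

/-- The `t`-th smallest value (0-indexed) among `w 0, …, w (K-1)`. -/
noncomputable def orderStat {K : ℕ} (w : Fin K → ℝ) (t : Fin K) : ℝ :=
  w (Tuple.sort w t)

lemma le_orderStat_iff {K : ℕ} (w : Fin K → ℝ) (t : Fin K) (x : ℝ) :
    x ≤ orderStat w t ↔ (Finset.univ.filter (fun i => w i < x)).card ≤ (t : ℕ) := by
  constructor
  · intro h
    have hcard : (Finset.univ.filter (fun i => w i < x)).card ≤ (Finset.Iio t).card := by
      apply Finset.card_le_card_of_injOn (fun i => (Tuple.sort w).symm i)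
      · intro i hi
        simp only [Finset.mem_coe, Finset.mem_filter, Finset.mem_univ, true_and] at hi
        simp only [Finset.mem_coe, Finset.mem_Iio]
        by_contra hle
        push_neg at hle
        have hmon := Tuple.monotone_sort w hle
        simp only [Function.comp_apply, Equiv.apply_symm_apply] at hmon
        have : x ≤ w i := le_trans h hmon
        linarith
      · exact fun a _ b _ hab => (Tuple.sort w).symm.injective hab
    simpa [Fin.card_Iio] using hcard
  · intro h
    by_contra hlt
    push_neg at hlt
    have hsub : (Finset.Iic t).image (Tuple.sort w) ⊆
        Finset.univ.filter (fun i => w i < x) := by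
      intro i hi
      simp only [Finset.mem_image, Finset.mem_Iic] at hi
      obtain ⟨j, hj, rfl⟩ := hi
      simp only [Finset.mem_filter, Finset.mem_univ, true_and]
      exact lt_of_le_of_lt (Tuple.monotone_sort w hj) hlt
    have := Finset.card_le_card hsub
    rw [Finset.card_image_of_injective _ (Tuple.sort w).injective, Fin.card_Iic] at this
    omega

lemma rank_lemma {n : ℕ} (w : Fin n → ℝ) (m : ℕ) (hm : m < n) :
    m + 1 ≤ (Finset.univ.filter (fun i =>
      (Finset.univ.filter (fun j => w j < w i)).card ≤ m)).card := by
  set σ := Tuple.sort w with hσ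
  set x := w (σ ⟨m, hm⟩) with hx
  have hxcard : (Finset.univ.filter (fun j => w j < x)).card ≤ m :=
    (le_orderStat_iff w ⟨m, hm⟩ x).1 (le_refl _)
  have hsub : (Finset.Iic (⟨m, hm⟩ : Fin n)).image σ ⊆
      Finset.univ.filter (fun i =>
        (Finset.univ.filter (fun j => w j < w i)).card ≤ m) := by
    intro i hi
    simp only [Finset.mem_image, Finset.mem_Iic] at hi
    obtain ⟨j, hj, rfl⟩ := hi
    have h1 : w (σ j) ≤ x := Tuple.monotone_sort w hj
    refine Finset.mem_filter.2 ⟨Finset.mem_univ _, le_trans (Finset.card_le_card ?_) hxcard⟩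
    intro k hk
    simp only [Finset.mem_filter, Finset.mem_univ, true_and] at hk ⊢
    linarith
  have := Finset.card_le_card hsub
  rwa [Finset.card_image_of_injective _ σ.injective, Fin.card_Iic] at this

lemma card_filter_comp_perm {n : ℕ} (w : Fin n → ℝ) (σ : Equiv.Perm (Fin n)) (x : ℝ) :
    (Finset.univ.filter (fun j => w (σ j) < x)).card
      = (Finset.univ.filter (fun j => w j < x)).card := by
  apply Finset.card_bij' (fun j _ => σ j) (fun j _ => σ.symm j) <;>
    simp [Finset.mem_filter]

lemma measurable_rankCard {n : ℕ} (i : Fin n) :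
    Measurable (fun w : Fin n → ℝ => (Finset.univ.filter (fun j => w j < w i)).card) := by
  simp_rw [Finset.card_filter]
  exact Finset.measurable_sum _ (fun j _ =>
    Measurable.ite (measurableSet_lt (measurable_pi_apply j) (measurable_pi_apply i))
      measurable_const measurable_const)

/-- CQR coverage guarantee (Theorem 1 of the paper in prediction-interval form):
if the pairs `(Z i, Y i)` for `i = 1, …, K+1` are exchangeable, `μlo, μhi` are fixed
measurable functions, the non-conformity scores are
`v i = max (μlo (Z i) − Y i) (Y i − μhi (Z i))`, `α ∈ (0,1)` with `⌈(K+1)(1−α)⌉ ≤ K`,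
and `q̂` is the `⌈(K+1)(1−α)⌉`-th order statistic of `v_1, …, v_K`, then
`ℙ(μlo (Z_{K+1}) − q̂ ≤ Y_{K+1} ∧ Y_{K+1} ≤ μhi (Z_{K+1}) + q̂) ≥ 1 − α`. -/
theorem cqr_coverage
    {Ω E : Type*} [MeasurableSpace Ω] [MeasurableSpace E]
    (μ : Measure Ω) [IsProbabilityMeasure μ]
    (K : ℕ) (hK : 1 ≤ K)
    (X : Fin (K + 1) → Ω → E × ℝ) (hmeas : ∀ i, Measurable (X i))
    (hexch : ∀ σ : Equiv.Perm (Fin (K + 1)),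
      Measure.map (fun ω (i : Fin (K + 1)) => X (σ i) ω) μ
        = Measure.map (fun ω (i : Fin (K + 1)) => X i ω) μ)
    (μlo μhi : E → ℝ) (hμlo : Measurable μlo) (hμhi : Measurable μhi)
    (v : Fin (K + 1) → Ω → ℝ)
    (hv : ∀ i ω, v i ω = max (μlo (X i ω).1 - (X i ω).2) ((X i ω).2 - μhi (X i ω).1))
    (α : ℝ) (hα : α ∈ Set.Ioo (0 : ℝ) 1)
    (hceil : ⌈((K : ℝ) + 1) * (1 - α)⌉₊ ≤ K) :
    1 - α ≤
      (μ {ω |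
        μlo (X (Fin.last K) ω).1 -
            orderStat (fun i : Fin K => v i.castSucc ω)
              ⟨⌈((K : ℝ) + 1) * (1 - α)⌉₊ - 1, by omega⟩
          ≤ (X (Fin.last K) ω).2 ∧
        (X (Fin.last K) ω).2 ≤
          μhi (X (Fin.last K) ω).1 +
            orderStat (fun i : Fin K => v i.castSucc ω)
              ⟨⌈((K : ℝ) + 1) * (1 - α)⌉₊ - 1, by omega⟩}).toReal := by
  obtain ⟨hα0, hα1⟩ := hα
  have hKpos : (0 : ℝ) < (K : ℝ) + 1 := by positivity
  set t := ⌈((K : ℝ) + 1) * (1 - α)⌉₊ with ht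
  have ht1 : 1 ≤ t := Nat.one_le_ceil_iff.mpr (by nlinarith)
  set m := t - 1 with hmdef
  have hmt : m + 1 = t := by omega
  have hmK : m < K + 1 := by omega
  -- measurability of scores
  have hvm : ∀ i, Measurable (v i) := by
    intro i
    have hvi : v i = fun ω =>
        max (μlo (X i ω).1 - (X i ω).2) ((X i ω).2 - μhi (X i ω).1) := funext (hv i)
    rw [hvi]
    exact ((hμlo.comp (hmeas i).fst).sub (hmeas i).snd).max
      ((hmeas i).snd.sub (hμhi.comp (hmeas i).fst))
  -- the score mapping on vectors
  set Φ : (Fin (K + 1) → E × ℝ) → (Fin (K + 1) → ℝ) :=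
    fun g i => max (μlo (g i).1 - (g i).2) ((g i).2 - μhi (g i).1) with hΦdef
  have hΦ : Measurable Φ := by
    apply measurable_pi_lambda
    intro i
    have h1 : Measurable fun g : Fin (K + 1) → E × ℝ => g i := measurable_pi_apply i
    exact ((hμlo.comp h1.fst).sub h1.snd).max (h1.snd.sub (hμhi.comp h1.fst))
  have hvpermmeas : ∀ σ : Equiv.Perm (Fin (K + 1)),
      Measurable (fun ω (i : Fin (K + 1)) => v (σ i) ω) :=
    fun σ => measurable_pi_lambda _ (fun i => hvm (σ i))
  have hv1 : Measurable (fun ω (i : Fin (K + 1)) => v i ω) :=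
    measurable_pi_lambda _ hvm
  -- exchangeability of the score vector
  have key : ∀ σ : Equiv.Perm (Fin (K + 1)),
      Measure.map (fun ω (i : Fin (K + 1)) => v (σ i) ω) μ
        = Measure.map (fun ω (i : Fin (K + 1)) => v i ω) μ := by
    intro σ
    have h1 : (fun ω (i : Fin (K + 1)) => v (σ i) ω)
        = Φ ∘ (fun ω i => X (σ i) ω) := by
      funext ω; funext i; simp [hΦdef, hv]
    have h2 : (fun ω (i : Fin (K + 1)) => v i ω)
        = Φ ∘ (fun ω i => X i ω) := by
      funext ω; funext i; simp [hΦdef, hv]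
    have hXσ : Measurable (fun ω (i : Fin (K + 1)) => X (σ i) ω) :=
      measurable_pi_lambda _ (fun i => hmeas (σ i))
    have hX : Measurable (fun ω (i : Fin (K + 1)) => X i ω) :=
      measurable_pi_lambda _ (fun i => hmeas i)
    rw [h1, h2, ← Measure.map_map hΦ hXσ, ← Measure.map_map hΦ hX, hexch σ]
  -- the events
  set B : Fin (K + 1) → Set (Fin (K + 1) → ℝ) := fun i =>
    {w | (Finset.univ.filter (fun j => w j < w i)).card ≤ m} with hBdef
  have hB : ∀ i, MeasurableSet (B i) := by
    intro i
    have : B i = (fun w : Fin (K + 1) → ℝ =>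
        (Finset.univ.filter (fun j => w j < w i)).card) ⁻¹' (Set.Iic m) := rfl
    rw [this]
    exact (measurable_rankCard i) measurableSet_Iic
  set A : Fin (K + 1) → Set Ω := fun i => (fun ω (j : Fin (K+1)) => v j ω) ⁻¹' B i with hAdef
  have hA : ∀ i, MeasurableSet (A i) := fun i => hv1 (hB i)
  -- all events have equal probability
  have hAeq : ∀ i, μ (A i) = μ (A (Fin.last K)) := by
    intro i
    set σ := Equiv.swap i (Fin.last K) with hσdef
    have hperm : A i = (fun ω (j : Fin (K + 1)) => v (σ j) ω) ⁻¹' B (Fin.last K) := by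
      ext ω
      simp only [Set.mem_preimage, hAdef, hBdef, Set.mem_setOf_eq]
      have hlast : v (σ (Fin.last K)) ω = v i ω := by
        rw [show σ (Fin.last K) = i from Equiv.swap_apply_right _ _]
      have hc : (Finset.univ.filter (fun j => v (σ j) ω < v i ω)).card
          = (Finset.univ.filter (fun j => v j ω < v i ω)).card :=
        card_filter_comp_perm (fun j => v j ω) σ (v i ω)
      simp only [hlast, hc]
    have h1 : μ (A i)
        = Measure.map (fun ω (j : Fin (K + 1)) => v (σ j) ω) μ (B (Fin.last K)) := by
      rw [Measure.map_apply (hvpermmeas σ) (hB _), hperm]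
    rw [h1, key σ, ← Measure.map_apply hv1 (hB _)]
  -- sum of probabilities is at least t
  have hsum : (t : ℝ≥0∞) ≤ ∑ i : Fin (K + 1), μ (A i) := by
    have h1 : ∀ i : Fin (K + 1), μ (A i) = ∫⁻ ω, (A i).indicator 1 ω ∂μ := by
      intro i; rw [lintegral_indicator_one (hA i)]
    simp_rw [h1]
    rw [← lintegral_finset_sum _ (fun i _ => (measurable_one.indicator (hA i)))]
    have h2 : ∀ ω : Ω, (t : ℝ≥0∞) ≤ ∑ i : Fin (K + 1), (A i).indicator 1 ω := by
      intro ω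
      have hrank := rank_lemma (fun j => v j ω) m hmK
      have h3 : ∑ i : Fin (K + 1), (A i).indicator (1 : Ω → ℝ≥0∞) ω
          = ((Finset.univ.filter (fun i : Fin (K + 1) =>
              (Finset.univ.filter (fun j => v j ω < v i ω)).card ≤ m)).card : ℝ≥0∞) := by
        rw [Finset.card_filter]
        push_cast
        apply Finset.sum_congr rfl
        intro i _
        by_cases hi : ω ∈ A i
        · rw [Set.indicator_of_mem hi]
          rw [if_pos (show (Finset.univ.filter (fun j => v j ω < v i ω)).card ≤ m from hi)]
          rfl
        · rw [Set.indicator_of_notMem hi]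
          rw [if_neg (show ¬ (Finset.univ.filter (fun j => v j ω < v i ω)).card ≤ m from hi)]
      rw [h3]
      exact Nat.cast_le.mpr (hmt ▸ hrank)
    calc (t : ℝ≥0∞) = ∫⁻ (_ω : Ω), (t : ℝ≥0∞) ∂μ := by simp
      _ ≤ _ := lintegral_mono h2
  -- hence μ (A last) ≥ t / (K+1)
  have hsum2 : (t : ℝ≥0∞) ≤ (K + 1) * μ (A (Fin.last K)) := by
    calc (t : ℝ≥0∞) ≤ ∑ i : Fin (K + 1), μ (A i) := hsum
      _ = ∑ _i : Fin (K + 1), μ (A (Fin.last K)) := Finset.sum_congr rfl (fun i _ => hAeq i)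
      _ = (K + 1) * μ (A (Fin.last K)) := by
          rw [Finset.sum_const, Finset.card_univ, Fintype.card_fin, nsmul_eq_mul]
          push_cast; ring
  -- convert to reals
  have hfin : μ (A (Fin.last K)) ≠ ⊤ := measure_ne_top μ _
  have hreal : (t : ℝ) ≤ ((K : ℝ) + 1) * (μ (A (Fin.last K))).toReal := by
    have := ENNReal.toReal_mono (by finiteness) hsum2
    rw [ENNReal.toReal_mul] at this
    simpa [ENNReal.toReal_add] using this
  have hcov : 1 - α ≤ (μ (A (Fin.last K))).toReal := by
    have hle : ((K : ℝ) + 1) * (1 - α) ≤ (t : ℝ) := Nat.le_ceil _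
    have hμnn : (0:ℝ) ≤ (μ (A (Fin.last K))).toReal := ENNReal.toReal_nonneg
    nlinarith
  -- identify the event
  have hset : {ω |
        μlo (X (Fin.last K) ω).1 -
            orderStat (fun i : Fin K => v i.castSucc ω) ⟨t - 1, by omega⟩
          ≤ (X (Fin.last K) ω).2 ∧
        (X (Fin.last K) ω).2 ≤
          μhi (X (Fin.last K) ω).1 +
            orderStat (fun i : Fin K => v i.castSucc ω) ⟨t - 1, by omega⟩}
      = A (Fin.last K) := by
    ext ω
    simp only [Set.mem_setOf_eq, hAdef, hBdef, Set.mem_preimage]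
    set q := orderStat (fun i : Fin K => v i.castSucc ω) ⟨t - 1, by omega⟩ with hq
    have hstep1 : (μlo (X (Fin.last K) ω).1 - q ≤ (X (Fin.last K) ω).2 ∧
        (X (Fin.last K) ω).2 ≤ μhi (X (Fin.last K) ω).1 + q) ↔ v (Fin.last K) ω ≤ q := by
      rw [hv]
      constructor
      · rintro ⟨h1, h2⟩; exact max_le (by linarith) (by linarith)
      · intro h
        rw [max_le_iff] at h
        exact ⟨by linarith [h.1], by linarith [h.2]⟩
    rw [hstep1, hq, le_orderStat_iff]
    have hcards : (Finset.univ.filter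
          (fun i : Fin K => v i.castSucc ω < v (Fin.last K) ω)).card
        = (Finset.univ.filter
          (fun j : Fin (K + 1) => v j ω < v (Fin.last K) ω)).card := by
      rw [Finset.card_filter, Finset.card_filter, Fin.sum_univ_castSucc]
      simp
    simp only [hcards, hmdef]
  rw [hset]
  exact hcov
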